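/- Let L > 0, let κ₀ : ℝ/Lℤ → ℝ be a continuously differentiable L-periodic function with ∫₀^L κ₀ dσ = 2π, and let Φ : ℝ → ℝ be continuous. Suppose u : (ℝ/Lℤ) × [0,T] → ℝ is a classical solution (C² in σ, C¹ in t) of ((1−uκ₀)/S(u))·u_t − Φ(((1−uκ₀)/S(u))·u_t) = κ(u) − (1/∫₀^L S(u) dσ)·(∫₀^L Φ(((1−uκ₀)/S(u))·u_t)·S(u) dσ + 2π) with sup_{σ,t}|u·κ₀| < 1. Then ∫₀^L (1 − u(σ,t)κ₀(σ))·u_t(σ,t) dσ = 0 for every t ∈ [0,T]; equivalently, the weighted area t ↦ ∫₀^L (u(σ,t) − κ₀(σ)u(σ,t)²/2) dσ is constant in time. -/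

import Mathlib

open Set MeasureTheory

noncomputable section

/-- Partial derivative in the first (space) variable `σ`. -/
def pdσ (u : ℝ → ℝ → ℝ) (σ t : ℝ) : ℝ := deriv (fun s => u s t) σ

/-- Partial derivative in the second (time) variable `t`. -/
def pdt (u : ℝ → ℝ → ℝ) (σ t : ℝ) : ℝ := deriv (fun τ => u σ τ) t

/-- The arc-length element `S(u) = √(u_σ² + (1 - u·κ0)²)`. -/
def arcEl (κ0 : ℝ → ℝ) (u : ℝ → ℝ → ℝ) (σ t : ℝ) : ℝ :=
  Real.sqrt ((pdσ u σ t)^2 + (1 - u σ t * κ0 σ)^2)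

/-- The signed curvature `κ(u)` of the normal graph `u(·,t)`. -/
def curvOf (κ0 : ℝ → ℝ) (u : ℝ → ℝ → ℝ) (σ t : ℝ) : ℝ :=
  ((1 - u σ t * κ0 σ) * pdσ (pdσ u) σ t + 2 * κ0 σ * (pdσ u σ t)^2
      + deriv κ0 σ * pdσ u σ t * u σ t + κ0 σ * (1 - u σ t * κ0 σ)^2)
    / (arcEl κ0 u σ t)^3

/-- The inward normal velocity `V(u) = ((1-uκ0)/S(u))·u_t`. -/
def nVel (κ0 : ℝ → ℝ) (u : ℝ → ℝ → ℝ) (σ t : ℝ) : ℝ :=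
  (1 - u σ t * κ0 σ) / arcEl κ0 u σ t * pdt u σ t

/-- The sharp-interface-limit evolution equation in normal-graph form at `(σ, t)`:
`V(u) - Φ(V(u)) = κ(u) - (∫₀ᴸ S(u))⁻¹·(∫₀ᴸ Φ(V(u))·S(u) + 2π)`. -/
def EvolEq (L : ℝ) (κ0 Φ : ℝ → ℝ) (u : ℝ → ℝ → ℝ) (σ t : ℝ) : Prop :=
  nVel κ0 u σ t - Φ (nVel κ0 u σ t) =
    curvOf κ0 u σ t - (∫ x in (0:ℝ)..L, arcEl κ0 u x t)⁻¹ *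
      ((∫ x in (0:ℝ)..L, Φ (nVel κ0 u x t) * arcEl κ0 u x t) + 2 * Real.pi)

lemma periodic_deriv' (f : ℝ → ℝ) {L : ℝ} (h : Function.Periodic f L) :
    Function.Periodic (deriv f) L := by
  intro x
  have hfe : (fun y => f (y + L)) = f := funext h
  rw [← deriv_comp_add_const f L x, hfe]

lemma part1 (L : ℝ) (hL : 0 < L) (κ0 Φ : ℝ → ℝ) (u : ℝ → ℝ → ℝ)
    (hκreg : ContDiff ℝ 1 κ0) (hκper : Function.Periodic κ0 L)
    (hκint : (∫ σ in (0:ℝ)..L, κ0 σ) = 2 * Real.pi)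
    (hΦ : Continuous Φ) (t : ℝ)
    (hper : Function.Periodic (fun σ => u σ t) L)
    (hreg : ContDiff ℝ 2 (fun σ => u σ t))
    (hcut : Continuous (fun σ => pdt u σ t))
    (c : ℝ) (hc1 : c < 1) (hc : ∀ σ, |u σ t * κ0 σ| ≤ c)
    (heqn : ∀ σ, EvolEq L κ0 Φ u σ t) :
    (∫ σ in (0:ℝ)..L, (1 - u σ t * κ0 σ) * pdt u σ t) = 0 := by
  set f : ℝ → ℝ := fun σ => u σ t with hf
  -- basic regularity
  have hreg2 : ContDiff ℝ (1+1) f := by exact_mod_cast hreg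
  have hfd : Differentiable ℝ f := hreg.differentiable (by norm_num)
  have hf'1 : ContDiff ℝ 1 (deriv f) := (contDiff_succ_iff_deriv.mp hreg2).2.2
  have hf'd : Differentiable ℝ (deriv f) := hf'1.differentiable one_ne_zero
  have hf''c : Continuous (deriv (deriv f)) := (contDiff_one_iff_deriv.mp hf'1).2
  have hκd : Differentiable ℝ κ0 := hκreg.differentiable one_ne_zero
  have hκ'c : Continuous (deriv κ0) := (contDiff_one_iff_deriv.mp hκreg).2
  have hκc : Continuous κ0 := hκreg.continuous
  have hfc : Continuous f := hfd.continuous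
  have hf'c : Continuous (deriv f) := hf'1.continuous
  -- notation for a, b, S
  have hpd : (fun σ => pdσ u σ t) = deriv f := rfl
  have hb_pos : ∀ σ, 0 < 1 - u σ t * κ0 σ := by
    intro σ
    have h1 := (abs_le.mp (hc σ)).2
    linarith
  have hS_pos : ∀ σ, 0 < arcEl κ0 u σ t := by
    intro σ
    have := hb_pos σ
    exact Real.sqrt_pos.mpr (by positivity)
  have hS_sq : ∀ σ, (arcEl κ0 u σ t)^2 = (pdσ u σ t)^2 + (1 - u σ t * κ0 σ)^2 := by
    intro σ
    exact Real.sq_sqrt (by positivity)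
  -- continuity of S, curv, V
  have hbc : Continuous (fun σ => 1 - u σ t * κ0 σ) := by
    have : Continuous (fun σ => 1 - f σ * κ0 σ) := by continuity
    exact this
  have hSc : Continuous (fun σ => arcEl κ0 u σ t) := by
    have : Continuous (fun σ => Real.sqrt ((deriv f σ)^2 + (1 - f σ * κ0 σ)^2)) := by
      exact (((hf'c.pow 2).add ((continuous_const.sub (hfc.mul hκc)).pow 2))).sqrt
    exact this
  have hcurvc : Continuous (fun σ => curvOf κ0 u σ t) := by
    have hnum : Continuous (fun σ => (1 - u σ t * κ0 σ) * pdσ (pdσ u) σ t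
        + 2 * κ0 σ * (pdσ u σ t)^2 + deriv κ0 σ * pdσ u σ t * u σ t
        + κ0 σ * (1 - u σ t * κ0 σ)^2) := by
      have h2 : (fun σ => pdσ (pdσ u) σ t) = deriv (deriv f) := rfl
      have : Continuous (fun σ => (1 - f σ * κ0 σ) * deriv (deriv f) σ
          + 2 * κ0 σ * (deriv f σ)^2 + deriv κ0 σ * deriv f σ * f σ
          + κ0 σ * (1 - f σ * κ0 σ)^2) := by
        exact (((hbc.mul hf''c).add ((continuous_const.mul hκc).mul (hf'c.pow 2))).add
          ((hκ'c.mul hf'c).mul hfc)).add (hκc.mul (hbc.pow 2))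
      exact this
    exact hnum.div (hSc.pow 3) (fun σ => pow_ne_zero 3 (hS_pos σ).ne')
  have hVc : Continuous (fun σ => nVel κ0 u σ t) := by
    have : Continuous (fun σ => (1 - u σ t * κ0 σ) / arcEl κ0 u σ t * pdt u σ t) :=
      (hbc.div hSc (fun σ => (hS_pos σ).ne')).mul hcut
    exact this
  have hΦVc : Continuous (fun σ => Φ (nVel κ0 u σ t)) := hΦ.comp hVc
  -- FTC for the angle function
  have hder : ∀ σ, HasDerivAt (fun s => Real.arctan (deriv f s / (1 - f s * κ0 s)))
      (curvOf κ0 u σ t * arcEl κ0 u σ t - κ0 σ) σ := by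
    intro σ
    have hfa : HasDerivAt f (deriv f σ) σ := (hfd σ).hasDerivAt
    have haa : HasDerivAt (deriv f) (deriv (deriv f) σ) σ := (hf'd σ).hasDerivAt
    have hκa : HasDerivAt κ0 (deriv κ0 σ) σ := (hκd σ).hasDerivAt
    have hba : HasDerivAt (fun s => 1 - f s * κ0 s)
        (-(deriv f σ * κ0 σ + f σ * deriv κ0 σ)) σ := (hfa.mul hκa).const_sub 1
    have hbne : (1 - f σ * κ0 σ) ≠ 0 := (hb_pos σ).ne'
    have hq : HasDerivAt (fun s => deriv f s / (1 - f s * κ0 s))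
        ((deriv (deriv f) σ * (1 - f σ * κ0 σ) -
          deriv f σ * (-(deriv f σ * κ0 σ + f σ * deriv κ0 σ))) / (1 - f σ * κ0 σ)^2) σ :=
      haa.div hba hbne
    have harc := (Real.hasDerivAt_arctan (deriv f σ / (1 - f σ * κ0 σ))).comp σ hq
    refine harc.congr_deriv ?_
    have hb2 : (0:ℝ) < 1 - f σ * κ0 σ := hb_pos σ
    have hSpos := hS_pos σ
    have hSsq' : (arcEl κ0 u σ t)^2 = (deriv f σ)^2 + (1 - f σ * κ0 σ)^2 := hS_sq σ
    have habne : (deriv f σ)^2 + (1 - f σ * κ0 σ)^2 ≠ 0 := by positivity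
    rw [curvOf]
    rw [show pdσ (pdσ u) σ t = deriv (deriv f) σ from rfl,
      show pdσ u σ t = deriv f σ from rfl, show u σ t = f σ from rfl]
    rw [show (arcEl κ0 u σ t)^3 = arcEl κ0 u σ t * (arcEl κ0 u σ t)^2 by ring, hSsq']
    field_simp
    ring
  have hintκS : (∫ σ in (0:ℝ)..L, curvOf κ0 u σ t * arcEl κ0 u σ t) = 2 * Real.pi := by
    have hci : Continuous (fun σ => curvOf κ0 u σ t * arcEl κ0 u σ t) := hcurvc.mul hSc
    have hder_int : (∫ σ in (0:ℝ)..L, (curvOf κ0 u σ t * arcEl κ0 u σ t - κ0 σ)) =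
        Real.arctan (deriv f L / (1 - f L * κ0 L)) -
        Real.arctan (deriv f 0 / (1 - f 0 * κ0 0)) := by
      exact intervalIntegral.integral_eq_sub_of_hasDerivAt (fun σ _ => hder σ)
        ((hci.sub hκc).intervalIntegrable 0 L)
    have hfper : deriv f L = deriv f 0 := by
      have := periodic_deriv' f hper 0
      simpa using this
    have hfper2 : f L = f 0 := by have := hper 0; simpa using this
    have hκper2 : κ0 L = κ0 0 := by have := hκper 0; simpa using this
    rw [hfper, hfper2, hκper2, sub_self] at hder_int
    rw [intervalIntegral.integral_sub (hci.intervalIntegrable 0 L)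
      (hκc.intervalIntegrable 0 L), hκint] at hder_int
    linarith
  -- the pointwise identity from the equation
  set lam : ℝ := (∫ x in (0:ℝ)..L, arcEl κ0 u x t)⁻¹ *
      ((∫ x in (0:ℝ)..L, Φ (nVel κ0 u x t) * arcEl κ0 u x t) + 2 * Real.pi) with hlam
  have hpt : ∀ σ, (1 - u σ t * κ0 σ) * pdt u σ t =
      Φ (nVel κ0 u σ t) * arcEl κ0 u σ t + curvOf κ0 u σ t * arcEl κ0 u σ t
        - lam * arcEl κ0 u σ t := by
    intro σ
    have he := heqn σ
    rw [EvolEq] at he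
    have hVS : nVel κ0 u σ t * arcEl κ0 u σ t = (1 - u σ t * κ0 σ) * pdt u σ t := by
      rw [nVel]
      field_simp
      rw [mul_right_comm]
      exact mul_div_cancel_right₀ _ (hS_pos σ).ne'
    have : nVel κ0 u σ t = Φ (nVel κ0 u σ t) + curvOf κ0 u σ t - lam := by
      rw [hlam]; linarith
    calc (1 - u σ t * κ0 σ) * pdt u σ t = nVel κ0 u σ t * arcEl κ0 u σ t := hVS.symm
      _ = (Φ (nVel κ0 u σ t) + curvOf κ0 u σ t - lam) * arcEl κ0 u σ t := by rw [← this]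
      _ = _ := by ring
  -- integrate
  have hSint_pos : 0 < ∫ x in (0:ℝ)..L, arcEl κ0 u x t :=
    intervalIntegral.intervalIntegral_pos_of_pos (hSc.intervalIntegrable 0 L)
      (fun x => hS_pos x) hL
  have hi1 : IntervalIntegrable (fun σ => Φ (nVel κ0 u σ t) * arcEl κ0 u σ t) volume 0 L :=
    (hΦVc.mul hSc).intervalIntegrable 0 L
  have hi2 : IntervalIntegrable (fun σ => curvOf κ0 u σ t * arcEl κ0 u σ t) volume 0 L :=
    (hcurvc.mul hSc).intervalIntegrable 0 L
  have hi3 : IntervalIntegrable (fun σ => lam * arcEl κ0 u σ t) volume 0 L :=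
    (continuous_const.mul hSc).intervalIntegrable 0 L
  calc (∫ σ in (0:ℝ)..L, (1 - u σ t * κ0 σ) * pdt u σ t)
      = ∫ σ in (0:ℝ)..L, (Φ (nVel κ0 u σ t) * arcEl κ0 u σ t
          + curvOf κ0 u σ t * arcEl κ0 u σ t - lam * arcEl κ0 u σ t) := by
        exact intervalIntegral.integral_congr (fun σ _ => hpt σ)
    _ = (∫ σ in (0:ℝ)..L, Φ (nVel κ0 u σ t) * arcEl κ0 u σ t)
          + (∫ σ in (0:ℝ)..L, curvOf κ0 u σ t * arcEl κ0 u σ t)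
          - ∫ σ in (0:ℝ)..L, lam * arcEl κ0 u σ t := by
        rw [intervalIntegral.integral_sub (hi1.add hi2) hi3,
          intervalIntegral.integral_add hi1 hi2]
    _ = 0 := by
        rw [intervalIntegral.integral_const_mul, hintκS, hlam]
        field_simp
        ring

/-- for a classical solution (C² in σ, C¹ in t) of the sharp interface
limit equation over a C¹ reference curve of length `L` with total curvature `2π`, and
with `sup|u·κ0| < 1`, one has `∫₀ᴸ (1 - uκ0)·u_t dσ = 0` for all `t ∈ [0,T]`;
equivalently, the weighted area `t ↦ ∫₀ᴸ (u - κ0·u²/2) dσ` is constant in time. -/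
theorem stmt_4 (L T : ℝ) (hL : 0 < L) (hT : 0 < T)
    (κ0 Φ : ℝ → ℝ) (u : ℝ → ℝ → ℝ)
    (hκreg : ContDiff ℝ 1 κ0) (hκper : Function.Periodic κ0 L)
    (hκint : (∫ σ in (0:ℝ)..L, κ0 σ) = 2 * Real.pi)
    (hΦ : Continuous Φ)
    (hper : ∀ t ∈ Icc (0:ℝ) T, Function.Periodic (fun σ => u σ t) L)
    (hregσ : ∀ t ∈ Icc (0:ℝ) T, ContDiff ℝ 2 (fun σ => u σ t))
    (hregt : ∀ σ, ∀ t ∈ Icc (0:ℝ) T, DifferentiableAt ℝ (fun τ => u σ τ) t)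
    (hut_cont : ContinuousOn (fun p : ℝ × ℝ => pdt u p.1 p.2) (univ ×ˢ Icc (0:ℝ) T))
    (hsmall : ∃ c < (1:ℝ), ∀ σ, ∀ t ∈ Icc (0:ℝ) T, |u σ t * κ0 σ| ≤ c)
    (heqn : ∀ σ, ∀ t ∈ Icc (0:ℝ) T, EvolEq L κ0 Φ u σ t) :
    (∀ t ∈ Icc (0:ℝ) T, (∫ σ in (0:ℝ)..L, (1 - u σ t * κ0 σ) * pdt u σ t) = 0) ∧
    (∀ t1 ∈ Icc (0:ℝ) T, ∀ t2 ∈ Icc (0:ℝ) T,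
      (∫ σ in (0:ℝ)..L, (u σ t1 - κ0 σ * (u σ t1)^2 / 2)) =
      (∫ σ in (0:ℝ)..L, (u σ t2 - κ0 σ * (u σ t2)^2 / 2))) := by
  obtain ⟨c, hc1, hc⟩ := hsmall
  have hc0 : 0 ≤ c := le_trans (abs_nonneg _) (hc 0 0 ⟨le_rfl, hT.le⟩)
  -- continuity of the time-slice of pdt
  have hcut : ∀ t ∈ Icc (0:ℝ) T, Continuous (fun σ => pdt u σ t) := by
    intro t ht
    exact hut_cont.comp_continuous (continuous_id.prodMk continuous_const)
      (fun σ => ⟨mem_univ _, ht⟩)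
  have key1 : ∀ t ∈ Icc (0:ℝ) T,
      (∫ σ in (0:ℝ)..L, (1 - u σ t * κ0 σ) * pdt u σ t) = 0 := by
    intro t ht
    exact part1 L hL κ0 Φ u hκreg hκper hκint hΦ t (hper t ht) (hregσ t ht)
      (hcut t ht) c hc1 (fun σ => hc σ t ht) (fun σ => heqn σ t ht)
  refine ⟨key1, ?_⟩
  -- the clamp function
  set cl : ℝ → ℝ := fun s => max 0 (min s T) with hcl
  have hcl_mem : ∀ s, cl s ∈ Icc (0:ℝ) T := by
    intro s
    constructor
    · exact le_max_left _ _
    · simp only [hcl, max_le_iff]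
      exact ⟨hT.le, min_le_right _ _⟩
  have hcl_id : ∀ s ∈ Icc (0:ℝ) T, cl s = s := by
    intro s hs
    simp only [hcl]
    rw [min_eq_left hs.2, max_eq_right hs.1]
  have hcl_cont : Continuous cl := continuous_const.max (continuous_id.min continuous_const)
  -- joint continuity / measurability of the clamped pieces
  have hp_cont : Continuous (fun p : ℝ × ℝ => pdt u p.1 (cl p.2)) :=
    hut_cont.comp_continuous (continuous_fst.prodMk (hcl_cont.comp continuous_snd))
      (fun p => ⟨mem_univ _, hcl_mem p.2⟩)
  have hu_meas : Measurable (fun p : ℝ × ℝ => u p.1 (cl p.2)) := by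
    have hcont : ∀ σ, Continuous (fun s => u σ (cl s)) := by
      intro σ
      rw [continuous_iff_continuousAt]
      intro s
      exact ((hregt σ (cl s) (hcl_mem s)).continuousAt).comp (hcl_cont.continuousAt)
    have hmeas : ∀ s, Measurable (fun σ => u σ (cl s)) :=
      fun s => ((hregσ (cl s) (hcl_mem s)).continuous).measurable
    have := measurable_uncurry_of_continuous_of_measurable
      (u := fun s σ => u σ (cl s)) hcont hmeas
    exact this.comp measurable_swap
  set H : ℝ × ℝ → ℝ := fun p => (1 - u p.1 (cl p.2) * κ0 p.1) * pdt u p.1 (cl p.2) with hH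
  have hH_meas : Measurable H :=
    ((measurable_const.sub (hu_meas.mul (hκreg.continuous.measurable.comp measurable_fst))).mul
      hp_cont.measurable)
  -- uniform bound on pdt over the compact strip
  obtain ⟨M, hM⟩ : ∃ M, ∀ p ∈ (Icc (0:ℝ) L ×ˢ Icc (0:ℝ) T), ‖pdt u p.1 p.2‖ ≤ M := by
    exact (isCompact_Icc.prod isCompact_Icc).exists_bound_of_continuousOn
      (hut_cont.mono (prod_mono (subset_univ _) Subset.rfl))
  -- main step, assuming t1 ≤ t2
  have key2 : ∀ t1 ∈ Icc (0:ℝ) T, ∀ t2 ∈ Icc (0:ℝ) T, t1 ≤ t2 →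
      (∫ σ in (0:ℝ)..L, (u σ t1 - κ0 σ * (u σ t1)^2 / 2)) =
      (∫ σ in (0:ℝ)..L, (u σ t2 - κ0 σ * (u σ t2)^2 / 2)) := by
    intro t1 ht1 t2 ht2 h12
    have hsub : Icc t1 t2 ⊆ Icc (0:ℝ) T := Icc_subset_Icc ht1.1 ht2.2
    -- FTC in time, for each σ
    have hinner : ∀ σ, (u σ t2 - κ0 σ * (u σ t2)^2 / 2) - (u σ t1 - κ0 σ * (u σ t1)^2 / 2)
        = ∫ s in t1..t2, H (σ, s) := by
      intro σ
      have hHc : Continuous (fun s => H (σ, s)) := by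
        show Continuous (fun s => (1 - u σ (cl s) * κ0 σ) * pdt u σ (cl s))
        have h1 : Continuous (fun s => u σ (cl s)) := by
          rw [continuous_iff_continuousAt]
          intro s
          exact ((hregt σ (cl s) (hcl_mem s)).continuousAt).comp (hcl_cont.continuousAt)
        have h2 : Continuous (fun s => pdt u σ (cl s)) :=
          hp_cont.comp (continuous_const.prodMk continuous_id)
        exact (continuous_const.sub (h1.mul continuous_const)).mul h2
      have := intervalIntegral.integral_eq_sub_of_hasDerivAt
        (f := fun τ => u σ τ - κ0 σ * (u σ τ)^2 / 2) (f' := fun s => H (σ, s))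
        (a := t1) (b := t2) ?_ (hHc.intervalIntegrable t1 t2)
      · rw [this]
      · intro s hs
        rw [uIcc_of_le h12] at hs
        have hsT : s ∈ Icc (0:ℝ) T := hsub hs
        have hu' : HasDerivAt (fun τ => u σ τ) (pdt u σ s) s := (hregt σ s hsT).hasDerivAt
        have hd2 := hu'.sub ((((hu'.pow 2)).const_mul (κ0 σ)).div_const 2)
        refine hd2.congr_deriv ?_
        simp only [hH, hcl_id s hsT, Nat.cast_ofNat, pow_one]
        push_cast
        ring
    -- integrability on the product
    have hIntH : Integrable (Function.uncurry fun σ s => H (σ, s))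
        ((volume.restrict (Ioc 0 L)).prod (volume.restrict (Ioc t1 t2))) := by
      rw [Measure.prod_restrict]
      refine Measure.integrableOn_of_bounded (M := (1 + c) * M) ?_ hH_meas.aestronglyMeasurable ?_
      · rw [Measure.prod_prod]
        exact (ENNReal.mul_lt_top measure_Ioc_lt_top measure_Ioc_lt_top).ne
      · filter_upwards [ae_restrict_mem (measurableSet_Ioc.prod measurableSet_Ioc)] with p hp
        obtain ⟨hp1, hp2⟩ := hp
        have hsT : p.2 ∈ Icc (0:ℝ) T := hsub (Ioc_subset_Icc_self hp2)
        have hσ : p.1 ∈ Icc (0:ℝ) L := Ioc_subset_Icc_self hp1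
        have hpd : ‖pdt u p.1 (cl p.2)‖ ≤ M := by
          rw [hcl_id p.2 hsT]
          exact hM (p.1, p.2) ⟨hσ, hsT⟩
        have hb : ‖1 - u p.1 (cl p.2) * κ0 p.1‖ ≤ 1 + c := by
          rw [hcl_id p.2 hsT]
          have := hc p.1 p.2 hsT
          rw [Real.norm_eq_abs]
          have h1 := abs_le.mp this
          rw [abs_le]
          constructor <;> linarith
        calc ‖H p‖ = ‖1 - u p.1 (cl p.2) * κ0 p.1‖ * ‖pdt u p.1 (cl p.2)‖ := norm_mul _ _
          _ ≤ (1 + c) * M := by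
              apply mul_le_mul hb hpd (norm_nonneg _) (by linarith)
    -- put everything together
    have hG1 : Continuous (fun σ => u σ t1 - κ0 σ * (u σ t1)^2 / 2) := by
      have := (hregσ t1 ht1).continuous
      exact this.sub ((hκreg.continuous.mul (this.pow 2)).div_const 2)
    have hG2 : Continuous (fun σ => u σ t2 - κ0 σ * (u σ t2)^2 / 2) := by
      have := (hregσ t2 ht2).continuous
      exact this.sub ((hκreg.continuous.mul (this.pow 2)).div_const 2)
    have hdiff : (∫ σ in (0:ℝ)..L, (u σ t2 - κ0 σ * (u σ t2)^2 / 2))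
        - (∫ σ in (0:ℝ)..L, (u σ t1 - κ0 σ * (u σ t1)^2 / 2)) = 0 := by
      rw [← intervalIntegral.integral_sub (hG2.intervalIntegrable 0 L)
        (hG1.intervalIntegrable 0 L)]
      have step1 : (∫ σ in (0:ℝ)..L, ((u σ t2 - κ0 σ * (u σ t2)^2 / 2)
          - (u σ t1 - κ0 σ * (u σ t1)^2 / 2)))
          = ∫ σ in (0:ℝ)..L, ∫ s in t1..t2, H (σ, s) :=
        intervalIntegral.integral_congr (fun σ _ => hinner σ)
      rw [step1]
      have step2 : (∫ σ in (0:ℝ)..L, ∫ s in t1..t2, H (σ, s))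
          = ∫ σ in Ioc (0:ℝ) L, ∫ s in Ioc t1 t2, H (σ, s) := by
        rw [intervalIntegral.integral_of_le hL.le]
        refine setIntegral_congr_fun measurableSet_Ioc (fun σ _ => ?_)
        rw [intervalIntegral.integral_of_le h12]
      rw [step2]
      rw [MeasureTheory.integral_integral_swap hIntH]
      have step3 : ∀ s ∈ Ioc t1 t2, (∫ σ in Ioc (0:ℝ) L, H (σ, s)) = 0 := by
        intro s hs
        have hsT : s ∈ Icc (0:ℝ) T := hsub (Ioc_subset_Icc_self hs)
        have : (∫ σ in Ioc (0:ℝ) L, H (σ, s))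
            = ∫ σ in Ioc (0:ℝ) L, (1 - u σ s * κ0 σ) * pdt u σ s := by
          refine setIntegral_congr_fun measurableSet_Ioc (fun σ _ => ?_)
          simp only [hH, hcl_id s hsT]
        rw [this, ← intervalIntegral.integral_of_le hL.le]
        exact key1 s hsT
      rw [setIntegral_congr_fun measurableSet_Ioc step3]
      simp
    linarith
  intro t1 ht1 t2 ht2
  rcases le_total t1 t2 with h | h
  · exact key2 t1 ht1 t2 ht2 h
  · exact (key2 t2 ht2 t1 ht1 h).symm

end
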